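/- Let s ≥ 1, let G = ℤ^s be the free abelian group of rank s, and let χ : G → ℂ^× be a group homomorphism, defining a one-dimensional complex representation ℂ_χ of G (where m ∈ G acts on ℂ by multiplication by χ(m)). Then the group cohomology H^n(G, ℂ_χ) vanishes for every n ≥ 0 if and only if χ is not the trivial homomorphism. -/

import Mathlib

/-- The one-dimensional complex representation of a group `G` associated to a character
`χ : G → ℂˣ`, where `g ∈ G` acts on `ℂ` by multiplication by `χ(g)`. -/
noncomputable def oneDimRep (G : Type) [Group G] (χ : G →* ℂˣ) : Representation ℂ G ℂ where
  toFun g := (χ g : ℂ) • LinearMap.id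
  map_one' := by
    simp only [map_one, Units.val_one, one_smul]
    rfl
  map_mul' g h := by
    refine LinearMap.ext fun x => ?_
    simp only [map_mul, Units.val_mul, LinearMap.smul_apply, Module.End.mul_apply,
      LinearMap.id_apply, smul_eq_mul]
    ring

namespace Stmt10Aux

open groupCohomology CategoryTheory



section Combinatorics
variable {α : Type*} {n : ℕ}

theorem insertNth_lt (i : Fin (n+1)) (x : α) (p : Fin n → α) (k : Fin (n+1))
    (h : (k : ℕ) < (i : ℕ)) : Fin.insertNth (α := fun _ => α) i x p k = p ⟨k, by omega⟩ := by
  have hc : Fin.castSucc (⟨k, by omega⟩ : Fin n) < i := by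
    simp only [Fin.lt_def, Fin.coe_castSucc]; exact h
  have hk : i.succAbove ⟨k, by omega⟩ = k := by
    rw [Fin.succAbove_of_castSucc_lt _ _ hc]; exact Fin.ext rfl
  have h2 := Fin.insertNth_apply_succAbove (α := fun _ => α) i x p ⟨k, by omega⟩
  have h3 : Fin.insertNth (α := fun _ => α) i x p k
      = Fin.insertNth (α := fun _ => α) i x p (i.succAbove ⟨k, by omega⟩) :=
    congrArg (fun z => Fin.insertNth (α := fun _ => α) i x p z) hk.symm
  rw [h3]; exact h2

theorem insertNth_gt (i : Fin (n+1)) (x : α) (p : Fin n → α) (k : Fin (n+1))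
    (h : (i : ℕ) < (k : ℕ)) : Fin.insertNth (α := fun _ => α) i x p k = p ⟨(k : ℕ) - 1, by omega⟩ := by
  have hk : i.succAbove ⟨(k:ℕ) - 1, by omega⟩ = k := by
    rw [Fin.succAbove_of_le_castSucc _ _ (by simp only [Fin.le_def, Fin.coe_castSucc, Fin.val_mk]; omega)]
    exact Fin.ext (by simp only [Fin.val_succ, Fin.val_mk]; omega)
  have h2 := Fin.insertNth_apply_succAbove (α := fun _ => α) i x p ⟨(k:ℕ)-1, by omega⟩
  have h3 : Fin.insertNth (α := fun _ => α) i x p k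
      = Fin.insertNth (α := fun _ => α) i x p (i.succAbove ⟨(k:ℕ)-1, by omega⟩) :=
    congrArg (fun z => Fin.insertNth (α := fun _ => α) i x p z) hk.symm
  rw [h3]; exact h2

theorem insertNth_eq (i : Fin (n+1)) (x : α) (p : Fin n → α) (k : Fin (n+1))
    (h : (k : ℕ) = (i : ℕ)) : Fin.insertNth (α := fun _ => α) i x p k = x := by
  have : k = i := Fin.ext h
  rw [this, Fin.insertNth_apply_same]

end Combinatorics

section C
variable {G : Type*} [CommMonoid G] {n : ℕ} (t : G)

-- C1 : j + 1 < i
theorem contract_insert_lt (i j : Fin (n+2)) (g : Fin (n+1) → G) (hji : (j:ℕ)+1 < (i:ℕ)) :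
    Fin.contractNth j (· * ·) (i.insertNth t g)
      = Fin.insertNth ⟨(i:ℕ)-1, by omega⟩ t
          (Fin.contractNth ⟨(j:ℕ), by omega⟩ (· * ·) g) := by
  funext k
  rcases lt_trichotomy ((k:ℕ)) ((j:ℕ)) with hk | hk | hk
  · rw [Fin.contractNth_apply_of_lt _ _ _ _ (by simpa using hk),
      insertNth_lt _ _ _ k (by simp only [Fin.val_mk]; omega),
      insertNth_lt _ _ _ k.castSucc (by simp only [Fin.coe_castSucc]; omega),
      Fin.contractNth_apply_of_lt _ _ _ _ (by simp only [Fin.val_mk]; omega)]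
    exact congrArg g (Fin.ext (by simp))
  · rw [Fin.contractNth_apply_of_eq _ _ _ _ (by simpa using hk),
      insertNth_lt _ _ _ k.castSucc (by simp only [Fin.coe_castSucc]; omega),
      insertNth_lt _ _ _ k.succ (by simp only [Fin.val_succ]; omega),
      insertNth_lt _ _ _ k (by simp only [Fin.val_mk]; omega),
      Fin.contractNth_apply_of_eq _ _ _ _ (by simp only [Fin.val_mk]; omega)]
    exact congrArg₂ (· * ·) (congrArg g (Fin.ext (by simp))) (congrArg g (Fin.ext (by simp)))
  · rw [Fin.contractNth_apply_of_gt _ _ _ _ (by simpa using hk)]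
    rcases lt_trichotomy ((k:ℕ)+1) ((i:ℕ)) with hi | hi | hi
    · rw [insertNth_lt _ _ _ k.succ (by simp only [Fin.val_succ]; omega),
        insertNth_lt _ _ _ k (by simp only [Fin.val_mk]; omega),
        Fin.contractNth_apply_of_gt _ _ _ _ (by simp only [Fin.val_mk]; omega)]
      exact congrArg g (Fin.ext (by simp))
    · rw [insertNth_eq _ _ _ k.succ (by simp only [Fin.val_succ]; omega),
        insertNth_eq _ _ _ k (by simp only [Fin.val_mk]; omega)]
    · rw [insertNth_gt _ _ _ k.succ (by simp only [Fin.val_succ]; omega),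
        insertNth_gt _ _ _ k (by simp only [Fin.val_mk]; omega),
        Fin.contractNth_apply_of_gt _ _ _ _ (by simp only [Fin.val_mk]; omega)]
      exact congrArg g (Fin.ext (by simp only [Fin.val_succ, Fin.val_mk]; omega))

-- C4 : i < j
theorem contract_insert_gt (i j : Fin (n+2)) (g : Fin (n+1) → G) (hij : (i:ℕ) < (j:ℕ)) :
    Fin.contractNth j (· * ·) (i.insertNth t g)
      = Fin.insertNth ⟨(i:ℕ), by omega⟩ t
          (Fin.contractNth ⟨(j:ℕ)-1, by omega⟩ (· * ·) g) := by
  funext k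
  rcases lt_trichotomy ((k:ℕ)) ((j:ℕ)) with hk | hk | hk
  · rw [Fin.contractNth_apply_of_lt _ _ _ _ (by simpa using hk)]
    rcases lt_trichotomy ((k:ℕ)) ((i:ℕ)) with hi | hi | hi
    · rw [insertNth_lt _ _ _ k.castSucc (by simp only [Fin.coe_castSucc]; omega),
        insertNth_lt _ _ _ k (by simp only [Fin.val_mk]; omega),
        Fin.contractNth_apply_of_lt _ _ _ _ (by simp only [Fin.val_mk]; omega)]
      exact congrArg g (Fin.ext (by simp))
    · rw [insertNth_eq _ _ _ k.castSucc (by simp only [Fin.coe_castSucc]; omega),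
        insertNth_eq _ _ _ k (by simp only [Fin.val_mk]; omega)]
    · rw [insertNth_gt _ _ _ k.castSucc (by simp only [Fin.coe_castSucc]; omega),
        insertNth_gt _ _ _ k (by simp only [Fin.val_mk]; omega),
        Fin.contractNth_apply_of_lt _ _ _ _ (by simp only [Fin.val_mk]; omega)]
      exact congrArg g (Fin.ext (by simp only [Fin.coe_castSucc, Fin.val_mk]))
  · rw [Fin.contractNth_apply_of_eq _ _ _ _ (by simpa using hk),
      insertNth_gt _ _ _ k.castSucc (by simp only [Fin.coe_castSucc]; omega),
      insertNth_gt _ _ _ k.succ (by simp only [Fin.val_succ]; omega),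
      insertNth_gt _ _ _ k (by simp only [Fin.val_mk]; omega),
      Fin.contractNth_apply_of_eq _ _ _ _ (by simp only [Fin.val_mk]; omega)]
    exact congrArg₂ (· * ·)
      (congrArg g (Fin.ext (by simp only [Fin.coe_castSucc, Fin.coe_castSucc, Fin.val_mk])))
      (congrArg g (Fin.ext (by simp only [Fin.val_succ, Fin.val_mk]; omega)))
  · rw [Fin.contractNth_apply_of_gt _ _ _ _ (by simpa using hk),
      insertNth_gt _ _ _ k.succ (by simp only [Fin.val_succ]; omega),
      insertNth_gt _ _ _ k (by simp only [Fin.val_mk]; omega),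
      Fin.contractNth_apply_of_gt _ _ _ _ (by simp only [Fin.val_mk]; omega)]
    exact congrArg g (Fin.ext (by simp only [Fin.val_succ, Fin.val_mk]; omega))

-- C2 : the two "merge with t" terms agree
theorem contract_insert_mid (j : Fin (n+1)) (g : Fin (n+1) → G) :
    Fin.contractNth j.castSucc (· * ·) (Fin.insertNth j.succ t g)
      = Fin.contractNth j.castSucc (· * ·) (Fin.insertNth j.castSucc t g) := by
  funext k
  rcases lt_trichotomy ((k:ℕ)) ((j:ℕ)) with hk | hk | hk
  · rw [Fin.contractNth_apply_of_lt _ _ _ _ (by simpa using hk),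
      Fin.contractNth_apply_of_lt _ _ _ _ (by simpa using hk)]
    rw [insertNth_lt _ _ _ k.castSucc (by simp only [Fin.coe_castSucc, Fin.val_succ]; omega)]
    rw [insertNth_lt _ _ _ k.castSucc (by simp only [Fin.coe_castSucc]; omega)]
  · rw [Fin.contractNth_apply_of_eq _ _ _ _ (by simpa using hk),
      Fin.contractNth_apply_of_eq _ _ _ _ (by simpa using hk)]
    rw [insertNth_lt _ _ _ k.castSucc (by simp only [Fin.coe_castSucc, Fin.val_succ]; omega)]
    rw [insertNth_eq _ _ _ k.succ (by simp only [Fin.val_succ]; omega)]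
    rw [insertNth_eq _ _ _ k.castSucc (by simp only [Fin.coe_castSucc]; omega)]
    rw [insertNth_gt _ _ _ k.succ (by simp only [Fin.val_succ, Fin.coe_castSucc]; omega)]
    rw [mul_comm]
    exact congrArg (t * ·) (congrArg g (Fin.ext (by simp only [Fin.coe_castSucc, Fin.val_succ, Fin.val_mk]; omega)))
  · rw [Fin.contractNth_apply_of_gt _ _ _ _ (by simpa using hk),
      Fin.contractNth_apply_of_gt _ _ _ _ (by simpa using hk)]
    rw [insertNth_gt _ _ _ k.succ (by simp only [Fin.val_succ]; omega)]
    rw [insertNth_gt _ _ _ k.succ (by simp only [Fin.val_succ, Fin.coe_castSucc]; omega)]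

-- C3
theorem contract_insert_last (g : Fin (n+1) → G) :
    Fin.contractNth (Fin.last (n+1)) (· * ·) (Fin.insertNth (Fin.last (n+1)) t g) = g := by
  funext k
  rw [Fin.contractNth_apply_of_lt _ _ _ _ (by simp only [Fin.coe_castSucc, Fin.val_last]; omega),
    insertNth_lt _ _ _ k.castSucc (by simp only [Fin.coe_castSucc, Fin.val_last]; omega)]
  exact congrArg g (Fin.ext (by simp))
end C

variable {G : Type} [CommGroup G]

/-- The differential, as a plain function on ℂ-valued cochains. -/
noncomputable def dfun (χ : G →* ℂˣ) (m : ℕ) : ((Fin m → G) → ℂ) → ((Fin (m+1) → G) → ℂ) :=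
  fun ψ h => (χ (h 0) : ℂ) * ψ (fun k => h k.succ)
    + ∑ j : Fin (m+1), (-1:ℂ)^((j:ℕ)+1) * ψ (Fin.contractNth j (· * ·) h)

theorem d_eq_dfun (χ : G →* ℂˣ) (m : ℕ) :
    ⇑(inhomogeneousCochains.d (Rep.of (oneDimRep G χ)) m).hom = dfun χ m := rfl


theorem negpow (a b : ℕ) (h : a = b + 1) : (-1:ℂ)^a = -(-1:ℂ)^b := by
  subst h; rw [pow_succ]; ring

theorem claim2 {n : ℕ} (t : G) (φ : (Fin (n+1) → G) → ℂ) (g : Fin (n+1) → G) :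
    (∑ p : Fin (n+2) × Fin (n+2), (-1:ℂ)^((p.1:ℕ)+(p.2:ℕ)+1)
        * φ (Fin.contractNth p.2 (· * ·) (Fin.insertNth p.1 t g)))
    + (∑ q : Fin (n+1) × Fin (n+1), (-1:ℂ)^((q.1:ℕ)+(q.2:ℕ)+1)
        * φ (Fin.insertNth q.1 t (Fin.contractNth q.2 (· * ·) g)))
    = - φ g := by
  classical
  set f2 : Fin (n+2) × Fin (n+2) → ℂ := fun p => (-1:ℂ)^((p.1:ℕ)+(p.2:ℕ)+1)
        * φ (Fin.contractNth p.2 (· * ·) (Fin.insertNth p.1 t g)) with hf2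
  set f4 : Fin (n+1) × Fin (n+1) → ℂ := fun q => (-1:ℂ)^((q.1:ℕ)+(q.2:ℕ)+1)
        * φ (Fin.insertNth q.1 t (Fin.contractNth q.2 (· * ·) g)) with hf4
  -- split f2 sum
  rw [← Finset.sum_filter_add_sum_filter_not Finset.univ (fun p => (p.2:ℕ)+1 < (p.1:ℕ)) f2]
  rw [← Finset.sum_filter_add_sum_filter_not
      (Finset.univ.filter (fun p => ¬((p.2:ℕ)+1 < (p.1:ℕ)))) (fun p => (p.1:ℕ) < (p.2:ℕ)) f2]
  -- split f4 sum
  rw [← Finset.sum_filter_add_sum_filter_not Finset.univ (fun q => (q.2:ℕ) < (q.1:ℕ)) f4]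
  -- piece 1 : j+1 < i  ↦  (i-1, j) with j < i-1... i.e. q.2 < q.1
  have e1 : ∑ p ∈ Finset.univ.filter (fun p : Fin (n+2) × Fin (n+2) => (p.2:ℕ)+1 < (p.1:ℕ)), f2 p
      = ∑ q ∈ Finset.univ.filter (fun q : Fin (n+1) × Fin (n+1) => (q.2:ℕ) < (q.1:ℕ)), (- f4 q) := by
    refine Finset.sum_bij' (i := fun p hp => (⟨(p.1:ℕ)-1, by omega⟩, ⟨(p.2:ℕ), by
        simp only [Finset.mem_filter] at hp; omega⟩))
      (j := fun q hq => (⟨(q.1:ℕ)+1, by omega⟩, ⟨(q.2:ℕ), by omega⟩)) ?_ ?_ ?_ ?_ ?_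
    · intro p hp
      simp only [Finset.mem_filter, Finset.mem_univ, true_and] at hp ⊢
      (try simp only [Fin.val_mk]) <;> omega
    · intro q hq
      simp only [Finset.mem_filter, Finset.mem_univ, true_and] at hq ⊢
      (try simp only [Fin.val_mk]) <;> omega
    · intro p hp
      simp only [Finset.mem_filter, Finset.mem_univ, true_and] at hp
      ext <;> (try simp only [Fin.val_mk]) <;> omega
    · intro q hq
      ext <;> (try simp only [Fin.val_mk]) <;> omega
    · intro p hp
      simp only [Finset.mem_filter, Finset.mem_univ, true_and] at hp
      rw [hf2, hf4]
      dsimp only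
      rw [contract_insert_lt t p.1 p.2 g hp,
        negpow ((p.1:ℕ)+(p.2:ℕ)+1) (((p.1:ℕ)-1)+(p.2:ℕ)+1) (by omega)]
      first | ring | (simp only [Fin.val_mk]; ring)
  -- piece 2 : i < j  ↦  (i, j-1) with i ≤ j-1, i.e. ¬(q.2 < q.1)
  have e2 : ∑ p ∈ Finset.univ.filter (fun p : Fin (n+2) × Fin (n+2) => (p.1:ℕ) < (p.2:ℕ)), f2 p
      = ∑ q ∈ Finset.univ.filter (fun q : Fin (n+1) × Fin (n+1) => ¬((q.2:ℕ) < (q.1:ℕ))), (- f4 q) := by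
    refine Finset.sum_bij' (i := fun p hp => (⟨(p.1:ℕ), by
        simp only [Finset.mem_filter] at hp; omega⟩, ⟨(p.2:ℕ)-1, by omega⟩))
      (j := fun q hq => (⟨(q.1:ℕ), by omega⟩, ⟨(q.2:ℕ)+1, by omega⟩)) ?_ ?_ ?_ ?_ ?_
    · intro p hp
      simp only [Finset.mem_filter, Finset.mem_univ, true_and] at hp ⊢
      (try simp only [Fin.val_mk]) <;> omega
    · intro q hq
      simp only [Finset.mem_filter, Finset.mem_univ, true_and] at hq ⊢
      (try simp only [Fin.val_mk]) <;> omega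
    · intro p hp
      simp only [Finset.mem_filter, Finset.mem_univ, true_and] at hp
      ext <;> (try simp only [Fin.val_mk]) <;> omega
    · intro q hq
      simp only [Finset.mem_filter, Finset.mem_univ, true_and] at hq
      ext <;> (try simp only [Fin.val_mk]) <;> omega
    · intro p hp
      simp only [Finset.mem_filter, Finset.mem_univ, true_and] at hp
      rw [hf2, hf4]
      dsimp only
      rw [contract_insert_gt t p.1 p.2 g hp,
        negpow ((p.1:ℕ)+(p.2:ℕ)+1) ((p.1:ℕ)+((p.2:ℕ)-1)+1) (by omega)]
      first | ring | (simp only [Fin.val_mk]; ring)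
  -- the middle piece
  have hmidset : (Finset.univ.filter (fun p : Fin (n+2) × Fin (n+2) => ¬((p.2:ℕ)+1 < (p.1:ℕ)))).filter
      (fun p => ¬((p.1:ℕ) < (p.2:ℕ)))
      = (Finset.univ.filter (fun p : Fin (n+2) × Fin (n+2) => (p.1:ℕ) = (p.2:ℕ))) ∪
        (Finset.univ.filter (fun p : Fin (n+2) × Fin (n+2) => (p.1:ℕ) = (p.2:ℕ)+1)) := by
    ext p
    simp only [Finset.mem_filter, Finset.mem_union, Finset.mem_univ, true_and]
    omega
  have hQeq : (Finset.univ.filter (fun p : Fin (n+2) × Fin (n+2) => ¬((p.2:ℕ)+1 < (p.1:ℕ)))).filter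
      (fun p => (p.1:ℕ) < (p.2:ℕ))
      = Finset.univ.filter (fun p : Fin (n+2) × Fin (n+2) => (p.1:ℕ) < (p.2:ℕ)) := by
    ext p
    simp only [Finset.mem_filter, Finset.mem_univ, true_and]
    omega
  have ediag : ∑ p ∈ Finset.univ.filter (fun p : Fin (n+2) × Fin (n+2) => (p.1:ℕ) = (p.2:ℕ)), f2 p
      = ∑ i : Fin (n+2), f2 (i, i) := by
    refine Finset.sum_bij' (i := fun p _ => p.1) (j := fun a _ => (a, a)) ?_ ?_ ?_ ?_ ?_
    · intro p hp; exact Finset.mem_univ _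
    · intro a ha
      simp only [Finset.mem_filter, Finset.mem_univ, true_and]
    · intro p hp
      simp only [Finset.mem_filter, Finset.mem_univ, true_and] at hp
      ext <;> (try simp only [Fin.val_mk]) <;> omega
    · intro a ha; rfl
    · intro p hp
      simp only [Finset.mem_filter, Finset.mem_univ, true_and] at hp
      exact congrArg f2 (Prod.ext rfl (Fin.ext hp.symm))
  have esup : ∑ p ∈ Finset.univ.filter (fun p : Fin (n+2) × Fin (n+2) => (p.1:ℕ) = (p.2:ℕ)+1), f2 p
      = ∑ j : Fin (n+1), f2 (j.succ, j.castSucc) := by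
    refine Finset.sum_bij' (i := fun p hp => (⟨(p.2:ℕ), by
        simp only [Finset.mem_filter] at hp; omega⟩ : Fin (n+1)))
      (j := fun a _ => (a.succ, a.castSucc)) ?_ ?_ ?_ ?_ ?_
    · intro p hp; exact Finset.mem_univ _
    · intro a ha
      simp only [Finset.mem_filter, Finset.mem_univ, true_and, Fin.val_succ, Fin.coe_castSucc]
    · intro p hp
      simp only [Finset.mem_filter, Finset.mem_univ, true_and] at hp
      ext <;> simp only [Fin.val_succ, Fin.coe_castSucc, Fin.val_mk] <;> omega
    · intro a ha
      ext <;> simp only [Fin.val_succ, Fin.coe_castSucc, Fin.val_mk]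
    · intro p hp
      simp only [Finset.mem_filter, Finset.mem_univ, true_and] at hp
      refine congrArg f2 (Prod.ext (Fin.ext ?_) (Fin.ext ?_)) <;>
        simp only [Fin.val_succ, Fin.coe_castSucc, Fin.val_mk] <;> omega
  have hmid : ∑ p ∈ (Finset.univ.filter (fun p : Fin (n+2) × Fin (n+2) => ¬((p.2:ℕ)+1 < (p.1:ℕ)))).filter
      (fun p => ¬((p.1:ℕ) < (p.2:ℕ))), f2 p = - φ g := by
    rw [hmidset, Finset.sum_union (by
      rw [Finset.disjoint_left]
      intro p hp hq
      simp only [Finset.mem_filter, Finset.mem_univ, true_and] at hp hq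
      omega)]
    rw [ediag, esup]
    have h1 : ∀ i : Fin (n+2), f2 (i, i)
        = - φ (Fin.contractNth i (· * ·) (Fin.insertNth i t g)) := by
      intro i
      rw [hf2]
      dsimp only
      have : (-1:ℂ)^((i:ℕ)+(i:ℕ)+1) = -1 := by
        rw [negpow ((i:ℕ)+(i:ℕ)+1) ((i:ℕ)+(i:ℕ)) rfl, ← two_mul, pow_mul]
        norm_num
      rw [this]; ring
    have h2 : ∀ j : Fin (n+1), f2 (j.succ, j.castSucc)
        = φ (Fin.contractNth j.castSucc (· * ·) (Fin.insertNth j.castSucc t g)) := by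
      intro j
      rw [hf2]
      dsimp only
      rw [contract_insert_mid t j g]
      have : (-1:ℂ)^((↑(j.succ):ℕ)+(↑(j.castSucc):ℕ)+1) = 1 := by
        simp only [Fin.val_succ, Fin.coe_castSucc]
        rw [show (↑j+1)+(↑j:ℕ)+1 = 2*((j:ℕ)+1) by ring, pow_mul]
        norm_num
      rw [this, one_mul]
    rw [Finset.sum_congr rfl (fun i _ => h1 i), Finset.sum_congr rfl (fun j _ => h2 j)]
    rw [Finset.sum_neg_distrib]
    rw [Fin.sum_univ_castSucc
      (f := fun i : Fin (n+2) => φ (Fin.contractNth i (· * ·) (Fin.insertNth i t g)))]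
    rw [contract_insert_last t g]
    ring
  rw [e1, hQeq, e2, hmid, Finset.sum_neg_distrib, Finset.sum_neg_distrib]
  ring

noncomputable def Klin (t : G) (m : ℕ) : ((Fin (m+1) → G) → ℂ) →ₗ[ℂ] ((Fin m → G) → ℂ) where
  toFun φ := fun u => ∑ i : Fin (m+1), (-1:ℂ)^(i:ℕ) * φ (Fin.insertNth i t u)
  map_add' φ ψ := by
    funext u
    simp only [Pi.add_apply, mul_add, Finset.sum_add_distrib]
  map_smul' c φ := by
    funext u
    simp only [Pi.smul_apply, smul_eq_mul, RingHom.id_apply, Finset.mul_sum]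
    exact Finset.sum_congr rfl fun i _ => by ring

theorem Klin_apply (t : G) (m : ℕ) (φ : (Fin (m+1) → G) → ℂ) (u : Fin m → G) :
    Klin t m φ u = ∑ i : Fin (m+1), (-1:ℂ)^(i:ℕ) * φ (Fin.insertNth i t u) := rfl

theorem La {n : ℕ} (t : G) (i : Fin (n+1)) (g : Fin (n+1) → G) :
    Fin.insertNth (α := fun _ => G) (Fin.succ i) t g 0 = g 0 := by
  have h := Fin.insertNth_apply_succAbove (α := fun _ => G) i.succ t g 0
  rwa [Fin.succ_succAbove_zero] at h

theorem Lb {n : ℕ} (t : G) (i : Fin (n+1)) (g : Fin (n+1) → G) :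
    (fun k : Fin (n+1) => Fin.insertNth (α := fun _ => G) (Fin.succ i) t g k.succ)
      = Fin.insertNth i t (fun k : Fin n => g k.succ) := by
  funext k
  rcases eq_or_ne k i with rfl | hk
  · rw [Fin.insertNth_apply_same]
    exact (Fin.insertNth_apply_same (α := fun _ => G) k t _).symm
  · obtain ⟨j, hj⟩ := Fin.exists_succAbove_eq hk
    rw [← hj, ← Fin.succ_succAbove_succ, Fin.insertNth_apply_succAbove,
      Fin.insertNth_apply_succAbove]

theorem key_zero (χ : G →* ℂˣ) (t : G) (φ : (Fin 0 → G) → ℂ) :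
    Klin t 0 (dfun χ 0 φ) = ((χ t : ℂ) - 1) • φ := by
  funext u
  have huniq : ∀ v : Fin 0 → G, v = u := fun v => Subsingleton.elim v u
  rw [Klin_apply, Fin.sum_univ_one]
  show (-1:ℂ)^((0:Fin 1):ℕ) * dfun χ 0 φ (Fin.insertNth 0 t u) = (((χ t : ℂ) - 1) • φ) u
  rw [dfun, Fin.sum_univ_one, Fin.insertNth_apply_same,
    huniq (fun k => Fin.insertNth (α := fun _ => G) (0 : Fin 1) t u k.succ),
    huniq (Fin.contractNth 0 (· * ·) (Fin.insertNth 0 t u))]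
  simp only [Pi.smul_apply, smul_eq_mul, Fin.val_zero, pow_zero, one_mul, pow_one]
  ring

theorem key_succ (χ : G →* ℂˣ) (t : G) (n : ℕ) (φ : (Fin (n+1) → G) → ℂ) :
    Klin t (n+1) (dfun χ (n+1) φ) + dfun χ n (Klin t n φ) = ((χ t : ℂ) - 1) • φ := by
  funext g
  show (∑ i : Fin (n+2), (-1:ℂ)^(i:ℕ) *
      ((χ (Fin.insertNth (α := fun _ => G) i t g 0) : ℂ)
          * φ (fun k => Fin.insertNth (α := fun _ => G) i t g k.succ)
        + ∑ j : Fin (n+2), (-1:ℂ)^((j:ℕ)+1)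
          * φ (Fin.contractNth j (· * ·) (Fin.insertNth i t g))))
    + ((χ (g 0) : ℂ) * (∑ i : Fin (n+1), (-1:ℂ)^(i:ℕ)
          * φ (Fin.insertNth i t (fun k : Fin n => g k.succ)))
      + ∑ j : Fin (n+1), (-1:ℂ)^((j:ℕ)+1) * (∑ i : Fin (n+1), (-1:ℂ)^(i:ℕ)
          * φ (Fin.insertNth i t (Fin.contractNth j (· * ·) g))))
    = ((χ t : ℂ) - 1) * φ g
  -- now a pure sum identity
  have hsplit : ∑ i : Fin (n+2), (-1:ℂ)^(i:ℕ) *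
      ((χ (Fin.insertNth (α := fun _ => G) i t g 0) : ℂ)
          * φ (fun k => Fin.insertNth (α := fun _ => G) i t g k.succ)
        + ∑ j : Fin (n+2), (-1:ℂ)^((j:ℕ)+1)
          * φ (Fin.contractNth j (· * ·) (Fin.insertNth i t g)))
      = (∑ i : Fin (n+2), (-1:ℂ)^(i:ℕ) *
          ((χ (Fin.insertNth (α := fun _ => G) i t g 0) : ℂ)
            * φ (fun k => Fin.insertNth (α := fun _ => G) i t g k.succ)))
        + ∑ i : Fin (n+2), (-1:ℂ)^(i:ℕ) * (∑ j : Fin (n+2), (-1:ℂ)^((j:ℕ)+1)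
            * φ (Fin.contractNth j (· * ·) (Fin.insertNth i t g))) := by
    rw [← Finset.sum_add_distrib]
    exact Finset.sum_congr rfl fun i _ => by ring
  rw [hsplit]
  -- S1 + S3
  have hS1 : ∑ i : Fin (n+2), (-1:ℂ)^(i:ℕ) *
      ((χ (Fin.insertNth (α := fun _ => G) i t g 0) : ℂ)
        * φ (fun k => Fin.insertNth (α := fun _ => G) i t g k.succ))
      = (χ t : ℂ) * φ g
        - (χ (g 0) : ℂ) * ∑ i : Fin (n+1), (-1:ℂ)^(i:ℕ)
            * φ (Fin.insertNth i t (fun k : Fin n => g k.succ)) := by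
    rw [Fin.sum_univ_succ]
    have h00 : Fin.insertNth (α := fun _ => G) (0 : Fin (n+2)) t g 0 = t :=
      Fin.insertNth_apply_same _ _ _
    have h01 : (fun k : Fin (n+1) => Fin.insertNth (α := fun _ => G) (0 : Fin (n+2)) t g k.succ)
        = g := by
      funext k
      have := Fin.insertNth_apply_succAbove (α := fun _ => G) (0 : Fin (n+2)) t g k
      rwa [Fin.succAbove_zero] at this
    rw [h00, h01]
    have hsucc : ∑ i : Fin (n+1), (-1:ℂ)^((Fin.succ i : Fin (n+2)):ℕ) *
        ((χ (Fin.insertNth (α := fun _ => G) (Fin.succ i) t g 0) : ℂ)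
          * φ (fun k => Fin.insertNth (α := fun _ => G) (Fin.succ i) t g k.succ))
        = ∑ i : Fin (n+1), -((χ (g 0) : ℂ) * ((-1:ℂ)^(i:ℕ)
            * φ (Fin.insertNth i t (fun k : Fin n => g k.succ)))) := by
      refine Finset.sum_congr rfl fun i _ => ?_
      rw [La, Lb, Fin.val_succ, negpow ((i:ℕ)+1) (i:ℕ) rfl]
      ring
    rw [hsucc, Finset.sum_neg_distrib, ← Finset.mul_sum]
    simp only [Fin.val_zero, pow_zero, one_mul]
    ring
  rw [hS1]
  -- S2 and S4 in product form
  have hS2 : ∑ i : Fin (n+2), (-1:ℂ)^(i:ℕ) * (∑ j : Fin (n+2), (-1:ℂ)^((j:ℕ)+1)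
        * φ (Fin.contractNth j (· * ·) (Fin.insertNth i t g)))
      = ∑ p : Fin (n+2) × Fin (n+2), (-1:ℂ)^((p.1:ℕ)+(p.2:ℕ)+1)
          * φ (Fin.contractNth p.2 (· * ·) (Fin.insertNth p.1 t g)) := by
    rw [Fintype.sum_prod_type]
    refine Finset.sum_congr rfl fun i _ => ?_
    rw [Finset.mul_sum]
    refine Finset.sum_congr rfl fun j _ => ?_
    rw [pow_add, pow_add, pow_one]
    ring
  have hS4 : ∑ j : Fin (n+1), (-1:ℂ)^((j:ℕ)+1) * (∑ i : Fin (n+1), (-1:ℂ)^(i:ℕ)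
        * φ (Fin.insertNth i t (Fin.contractNth j (· * ·) g)))
      = ∑ q : Fin (n+1) × Fin (n+1), (-1:ℂ)^((q.1:ℕ)+(q.2:ℕ)+1)
          * φ (Fin.insertNth q.1 t (Fin.contractNth q.2 (· * ·) g)) := by
    rw [Fintype.sum_prod_type, Finset.sum_comm]
    refine Finset.sum_congr rfl fun j _ => ?_
    rw [Finset.mul_sum]
    refine Finset.sum_congr rfl fun i _ => ?_
    rw [pow_add, pow_add, pow_one]
    ring
  rw [hS2, hS4]
  linear_combination claim2 t φ g

section Homotopy
variable (χ : G →* ℂˣ) (t : G) (ht : χ t ≠ 1)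

noncomputable def Kmor (m : ℕ) :
    (inhomogeneousCochains (Rep.of (oneDimRep G χ))).X (m+1) ⟶
      (inhomogeneousCochains (Rep.of (oneDimRep G χ))).X m :=
  ModuleCat.ofHom (((χ t : ℂ) - 1)⁻¹ • Klin t m)

noncomputable def myHomotopy :
    Homotopy (𝟙 (inhomogeneousCochains (Rep.of (oneDimRep G χ)))) 0 where
  hom i j :=
    if h : j + 1 = i then
      eqToHom (congrArg (inhomogeneousCochains (Rep.of (oneDimRep G χ))).X h.symm) ≫ Kmor χ t j
    else 0
  zero i j h := dif_neg h
  comm i := by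
    have hc : ((χ t : ℂ) - 1) ≠ 0 := by
      rw [sub_ne_zero]
      exact fun h => ht (Units.ext h)
    have hd1 : dNext i (fun i j => if h : j + 1 = i then
        eqToHom (congrArg (inhomogeneousCochains (Rep.of (oneDimRep G χ))).X h.symm) ≫ Kmor χ t j
      else 0) = (inhomogeneousCochains (Rep.of (oneDimRep G χ))).d i (i+1) ≫ Kmor χ t i := by
      rw [dNext_eq _ (show (ComplexShape.up ℕ).Rel i (i+1) from rfl)]
      congr 1
      rw [dif_pos rfl, eqToHom_refl, Category.id_comp]
    have hdfun_smul : ∀ (m : ℕ) (c : ℂ) (ψ : (Fin m → G) → ℂ),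
        dfun χ m (c • ψ) = c • dfun χ m ψ := by
      intro m c ψ
      rw [← d_eq_dfun χ m]
      exact map_smul _ _ _
    rcases i with _ | n
    · have hp : prevD 0 (fun i j => if h : j + 1 = i then
          eqToHom (congrArg (inhomogeneousCochains (Rep.of (oneDimRep G χ))).X h.symm) ≫ Kmor χ t j
        else 0) = 0 := by
        apply prevD_eq_zero
        simp
      rw [hd1, hp, inhomogeneousCochains.d_def]
      have hz : ((0 : inhomogeneousCochains (Rep.of (oneDimRep G χ)) ⟶
          inhomogeneousCochains (Rep.of (oneDimRep G χ))).f 0) = 0 := rfl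
      rw [hz, add_zero, add_zero, HomologicalComplex.id_f]
      refine ModuleCat.hom_ext (LinearMap.ext fun φ => ?_)
      show φ = ((((χ t : ℂ) - 1)⁻¹ • Klin t 0) (dfun χ 0 φ))
      rw [LinearMap.smul_apply, key_zero χ t φ, smul_smul, inv_mul_cancel₀ hc, one_smul]
    · have hp : prevD (n+1) (fun i j => if h : j + 1 = i then
          eqToHom (congrArg (inhomogeneousCochains (Rep.of (oneDimRep G χ))).X h.symm) ≫ Kmor χ t j
        else 0) = Kmor χ t n ≫ (inhomogeneousCochains (Rep.of (oneDimRep G χ))).d n (n+1) := by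
        rw [prevD_eq _ (show (ComplexShape.up ℕ).Rel n (n+1) from rfl)]
        congr 1
        rw [dif_pos rfl, eqToHom_refl, Category.id_comp]
      rw [hd1, hp, inhomogeneousCochains.d_def, inhomogeneousCochains.d_def]
      have hz : ((0 : inhomogeneousCochains (Rep.of (oneDimRep G χ)) ⟶
          inhomogeneousCochains (Rep.of (oneDimRep G χ))).f (n+1)) = 0 := rfl
      rw [hz, add_zero, HomologicalComplex.id_f]
      refine ModuleCat.hom_ext (LinearMap.ext fun φ => ?_)
      show φ = ((((χ t : ℂ) - 1)⁻¹ • Klin t (n+1)) (dfun χ (n+1) φ))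
        + dfun χ n ((((χ t : ℂ) - 1)⁻¹ • Klin t n) φ)
      rw [LinearMap.smul_apply, LinearMap.smul_apply, hdfun_smul n, ← smul_add,
        key_succ χ t n φ, smul_smul, inv_mul_cancel₀ hc, one_smul]
end Homotopy

theorem vanish (χ : G →* ℂˣ) (t : G) (ht : χ t ≠ 1) (n : ℕ) :
    Subsingleton (groupCohomology (Rep.of (oneDimRep G χ)) n) := by
  have h := (myHomotopy χ t ht).homologyMap_eq n
  rw [HomologicalComplex.homologyMap_id, HomologicalComplex.homologyMap_zero] at h
  constructor
  intro a b
  have ha : a = 0 := by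
    have := LinearMap.congr_fun (congrArg ModuleCat.Hom.hom h) a
    exact this
  have hb : b = 0 := by
    have := LinearMap.congr_fun (congrArg ModuleCat.Hom.hom h) b
    exact this
  rw [ha, hb]

theorem nontrivial_H0 (χ : G →* ℂˣ) (hχ : χ = 1) :
    ¬ Subsingleton (groupCohomology (Rep.of (oneDimRep G χ)) 0) := by
  intro hs
  have e := groupCohomology.H0Iso (Rep.of (oneDimRep G χ))
  have hsub : Subsingleton (Rep.of (oneDimRep G χ)).ρ.invariants :=
    (Equiv.subsingleton_congr e.toLinearEquiv.toEquiv).mp hs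
  have h1 : (show CoeSort.coe (Rep.of (oneDimRep G χ)) from (1 : ℂ))
      ∈ (Rep.of (oneDimRep G χ)).ρ.invariants := by
    intro g
    show (χ g : ℂ) * 1 = 1
    rw [hχ]
    simp
  have h0 : (show CoeSort.coe (Rep.of (oneDimRep G χ)) from (0 : ℂ))
      ∈ (Rep.of (oneDimRep G χ)).ρ.invariants := by
    intro g
    show (χ g : ℂ) * 0 = 0
    simp
  have heq := hsub.elim (⟨_, h1⟩ : (Rep.of (oneDimRep G χ)).ρ.invariants) ⟨_, h0⟩
  have : (1 : ℂ) = 0 := congrArg Subtype.val heq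
  exact one_ne_zero this


end Stmt10Aux

/-- Let `s ≥ 1`, `G = ℤ^s` the free abelian group of rank `s` (written multiplicatively),
and `χ : G → ℂˣ` a homomorphism, giving the one-dimensional complex representation `ℂ_χ`.
Then the group cohomology `H^n(G, ℂ_χ)` vanishes for every `n ≥ 0` if and only if `χ` is
not the trivial homomorphism. -/
theorem stmt10 (s : ℕ) (hs : 1 ≤ s)
    (χ : Multiplicative (Fin s → ℤ) →* ℂˣ) :
    (∀ n : ℕ, Subsingleton (groupCohomology (Rep.of (oneDimRep _ χ)) n)) ↔ χ ≠ 1 := by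
  constructor
  · intro h hχ
    exact Stmt10Aux.nontrivial_H0 χ hχ (h 0)
  · intro hχ n
    have : ∃ t, χ t ≠ 1 := by
      by_contra hall
      push_neg at hall
      exact hχ (MonoidHom.ext fun x => hall x)
    obtain ⟨t, ht⟩ := this
    exact Stmt10Aux.vanish χ t ht n
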